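/- For every polynomial p ∈ ℝ[X], E(X · p') = X · (E p)' − (E p)''. Equivalently, the operator e^{−D²/2} intertwines the Euler operator X·D with the Hermite differential operator 𝔻_H = X·D − D²: one has E ∘ (X·D) = 𝔻_H ∘ E. -/

import Mathlib

open Polynomial Finset

/-- The operator `e^{−D²/2}` on polynomials: the finite sum
`E p = Σ_{k=0}^{natDegree p} ((−1)^k / (2^k k!)) · p^{(2k)}`. -/
noncomputable def expNegHalfDSq (p : ℝ[X]) : ℝ[X] :=
  ∑ k ∈ range (p.natDegree + 1),
    ((-1 : ℝ) ^ k / (2 ^ k * (k.factorial : ℝ))) • (⇑derivative)^[2 * k] p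

private lemma iterDeriv_X_mul (q : ℝ[X]) (n : ℕ) :
    (⇑derivative)^[n + 1] (X * q) =
      X * (⇑derivative)^[n + 1] q + ((n : ℝ) + 1) • (⇑derivative)^[n] q := by
  induction n generalizing q with
  | zero => simp [derivative_mul]; ring
  | succ n ih =>
    rw [Function.iterate_succ_apply, derivative_mul, derivative_X, one_mul,
      iterate_map_add, ih (derivative q)]
    simp only [← Function.iterate_succ_apply]
    push_cast
    module

private lemma iterDeriv_two_mul (q : ℝ[X]) (k : ℕ) :
    (⇑derivative)^[2 * k] (X * q) =
      X * (⇑derivative)^[2 * k] q + ((2 * k : ℕ) : ℝ) • (⇑derivative)^[2 * k - 1] q := by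
  cases k with
  | zero => simp
  | succ k =>
    have h : 2 * (k + 1) = (2 * k + 1) + 1 := by ring
    have h2 : 2 * (k + 1) - 1 = 2 * k + 1 := by omega
    rw [h2, h, iterDeriv_X_mul]
    push_cast
    module

private lemma expE_eq (p : ℝ[X]) (N : ℕ) (h : p.natDegree ≤ N) :
    expNegHalfDSq p = ∑ k ∈ range (N + 1),
      ((-1 : ℝ) ^ k / (2 ^ k * (k.factorial : ℝ))) • (⇑derivative)^[2 * k] p := by
  unfold expNegHalfDSq
  refine Finset.sum_subset (by simp; omega) ?_
  intro k hk hk'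
  simp only [mem_range] at hk hk'
  have : p.natDegree < 2 * k := by omega
  rw [iterate_derivative_eq_zero this, smul_zero]

/-- `e^{−D²/2}` intertwines the Euler operator `X·D` with the Hermite differential
operator `𝔻_H = X·D − D²`:  `E (X·p') = X·(E p)' − (E p)''`. -/
theorem expNegHalfDSq_intertwines_euler (p : ℝ[X]) :
    expNegHalfDSq (X * derivative p) =
      X * derivative (expNegHalfDSq p) - derivative (derivative (expNegHalfDSq p)) := by
  set N := p.natDegree with hN
  set c : ℕ → ℝ := fun k => (-1 : ℝ) ^ k / (2 ^ k * (k.factorial : ℝ)) with hc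
  have hdeg : (X * derivative p).natDegree ≤ N := by
    rcases Nat.eq_zero_or_pos N with h0 | h1
    · have : derivative p = 0 := by
        rw [eq_C_of_natDegree_eq_zero h0]; simp
      simp [this]
    · calc (X * derivative p).natDegree ≤ X.natDegree + (derivative p).natDegree :=
            natDegree_mul_le
        _ ≤ 1 + (N - 1) := by
            gcongr
            · exact natDegree_X_le
            · exact natDegree_derivative_le p
        _ ≤ N := by omega
  rw [expE_eq _ N hdeg, expE_eq p N le_rfl]
  -- LHS as a sum of two parts
  have hL : (∑ k ∈ range (N + 1), c k • (⇑derivative)^[2 * k] (X * derivative p)) =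
      (∑ k ∈ range (N + 1), c k • (X * (⇑derivative)^[2 * k + 1] p)) +
        ∑ k ∈ range (N + 1), (c k * ((2 * k : ℕ) : ℝ)) • (⇑derivative)^[2 * k] p := by
    rw [← Finset.sum_add_distrib]
    refine Finset.sum_congr rfl fun k _ => ?_
    rw [iterDeriv_two_mul]
    have h1 : (⇑derivative)^[2 * k] (derivative p) = (⇑derivative)^[2 * k + 1] p :=
      (Function.iterate_succ_apply (⇑derivative) (2 * k) p).symm
    have h2 : ((2 * k : ℕ) : ℝ) • (⇑derivative)^[2 * k - 1] (derivative p)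
        = ((2 * k : ℕ) : ℝ) • (⇑derivative)^[2 * k] p := by
      cases k with
      | zero => simp
      | succ k =>
        have he : 2 * (k + 1) - 1 = 2 * k + 1 := by omega
        have he2 : 2 * (k + 1) = (2 * k + 1) + 1 := by omega
        rw [he, he2, Function.iterate_succ_apply (⇑derivative) (2 * k + 1) p]
    rw [h1, h2, smul_add, smul_smul]
  -- RHS derivatives
  have hd1 : derivative (∑ k ∈ range (N + 1), c k • (⇑derivative)^[2 * k] p) =
      ∑ k ∈ range (N + 1), c k • (⇑derivative)^[2 * k + 1] p := by
    rw [map_sum]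
    refine Finset.sum_congr rfl fun k _ => ?_
    rw [derivative_smul, ← Function.iterate_succ_apply' (⇑derivative) (2 * k) p]
  have hd2 : derivative (∑ k ∈ range (N + 1), c k • (⇑derivative)^[2 * k + 1] p) =
      ∑ k ∈ range (N + 1), c k • (⇑derivative)^[2 * k + 2] p := by
    rw [map_sum]
    refine Finset.sum_congr rfl fun k _ => ?_
    rw [derivative_smul, ← Function.iterate_succ_apply' (⇑derivative) (2 * k + 1) p]
  rw [hL, hd1, hd2, Finset.mul_sum]
  simp only [smul_comm, mul_smul_comm]
  -- the telescoping part
  set g : ℕ → ℝ[X] := fun j => (c j * ((2 * j : ℕ) : ℝ)) • (⇑derivative)^[2 * j] p with hg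
  have hshift : ∀ k, c k • (⇑derivative)^[2 * k + 2] p = - g (k + 1) := by
    intro k
    have hco : c k = -(c (k + 1) * ((2 * (k + 1) : ℕ) : ℝ)) := by
      simp only [hc, Nat.factorial_succ, pow_succ]
      push_cast
      have h1 : (2 : ℝ) ^ k ≠ 0 := by positivity
      have h2 : (k.factorial : ℝ) ≠ 0 := by positivity
      field_simp
    have hidx : 2 * (k + 1) = 2 * k + 2 := by ring
    rw [hg]
    simp only [hidx]
    rw [hco]
    push_cast
    module
  have htel : (∑ k ∈ range (N + 1), (c k * ((2 * k : ℕ) : ℝ)) • (⇑derivative)^[2 * k] p) =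
      - ∑ k ∈ range (N + 1), c k • (⇑derivative)^[2 * k + 2] p := by
    calc ∑ k ∈ range (N + 1), (c k * ((2 * k : ℕ) : ℝ)) • (⇑derivative)^[2 * k] p
        = ∑ k ∈ range (N + 2), g k := by
          have hz : (⇑derivative)^[2 * (N + 1)] p = 0 :=
            iterate_derivative_eq_zero (by omega)
          refine Eq.symm ?_
          rw [Finset.sum_range_succ]
          simp [hg, hz]
      _ = ∑ k ∈ range (N + 1), g (k + 1) + g 0 := Finset.sum_range_succ' g (N + 1)
      _ = ∑ k ∈ range (N + 1), g (k + 1) := by simp [hg]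
      _ = - ∑ k ∈ range (N + 1), c k • (⇑derivative)^[2 * k + 2] p := by
          rw [← Finset.sum_neg_distrib]
          exact Finset.sum_congr rfl fun k _ => by rw [hshift k, neg_neg]
  rw [htel]
  abel
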